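/- Relative bound for the perturbed point-vortex system: Fix an integer N ≥ 1. There exists a function C : ℕ × (ℝ₊)⁵ → ℝ₊, nondecreasing with respect to each of its six variables, with the following property. Let a_1,…,a_N ∈ ℝ∖{0}, set a = Σ_{i=1}^N |a_i| and A₀ = min over nonempty proper subsets P ⊊ {1,…,N} of |Σ_{i∈P} a_i|, and assume A₀ ≠ 0. Let G : (0,∞) → ℝ be differentiable with locally Lipschitz derivative on (0,∞) and with derivative Lipschitz on [1,∞), let T > 0, let f : [0,T) × ℝ² → ℝ² be smooth and bounded, and let x_1,…,x_N : [0,T) → ℝ² be differentiable curves with x_i(t) ≠ x_j(t) for i ≠ j satisfying x_i'(t) = Σ_{j≠i} a_j G'(|x_i(t) − x_j(t)|)(x_i(t) − x_j(t))^⊥/|x_i(t) − x_j(t)| + f(t, x_i(t)). Then for all t ∈ [0,T) and all i, j ∈ {1,…,N}: |(x_i(t) − x_j(t)) − (x_i(0) − x_j(0))| ≤ C(N, ‖f‖_{L^∞}, T, a, 1/A₀, sup_{r≥1}|G'(r)|). -/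

import Mathlib

open Filter MeasureTheory

noncomputable section

/-- The plane `ℝ²`. -/
abbrev Plane : Type := EuclideanSpace ℝ (Fin 2)

/-- Counterclockwise rotation by `π/2`: `(v₁, v₂)^⊥ = (−v₂, v₁)`. -/
def perp (v : Plane) : Plane := WithLp.toLp 2 ![-v 1, v 0]

/-- `∇^⊥_y K(|y|) = K'(|y|) y^⊥ / |y|` for a radial kernel profile `K`. -/
def gradPerp (K : ℝ → ℝ) (y : Plane) : Plane := (deriv K ‖y‖ / ‖y‖) • perp y

/-- A solution of the point-vortex system with intensities `a`, kernel profile `G`,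
on the time interval `[0, T)`, with no collapse. -/
def IsVortexSolution (N : ℕ) (a : Fin N → ℝ) (G : ℝ → ℝ) (T : ℝ)
    (x : Fin N → ℝ → Plane) : Prop :=
  (∀ t ∈ Set.Ico (0 : ℝ) T, ∀ i j : Fin N, i ≠ j → x i t ≠ x j t) ∧
  ∀ i : Fin N, ∀ t ∈ Set.Ico (0 : ℝ) T,
    HasDerivWithinAt (x i)
      (∑ j ∈ Finset.univ.erase i, a j • gradPerp G (x i t - x j t))
      (Set.Ico 0 T) t

/-- The kernel regularity used in the paper: `G ∈ C^{1,1}_loc((0,∞)) ∩ C^{1,1}([1,∞))`,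
i.e. `G` is differentiable on `(0,∞)`, with locally Lipschitz derivative there,
and with Lipschitz derivative on `[1,∞)`. -/
def KernelRegular (G : ℝ → ℝ) : Prop :=
  DifferentiableOn ℝ G (Set.Ioi 0) ∧
  (∀ s : Set ℝ, IsCompact s → s ⊆ Set.Ioi 0 → ∃ L : NNReal, LipschitzOnWith L (deriv G) s) ∧
  (∃ L : NNReal, LipschitzOnWith L (deriv G) (Set.Ici 1))

/-- A solution of the perturbed point-vortex system with external field `f`,
on `[0, T)`, with no collapse. -/
def IsPerturbedVortexSolution (N : ℕ) (a : Fin N → ℝ) (G : ℝ → ℝ) (T : ℝ)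
    (f : ℝ → Plane → Plane) (x : Fin N → ℝ → Plane) : Prop :=
  (∀ t ∈ Set.Ico (0 : ℝ) T, ∀ i j : Fin N, i ≠ j → x i t ≠ x j t) ∧
  ∀ i : Fin N, ∀ t ∈ Set.Ico (0 : ℝ) T,
    HasDerivWithinAt (x i)
      ((∑ j ∈ Finset.univ.erase i, a j • gradPerp G (x i t - x j t)) + f t (x i t))
      (Set.Ico 0 T) t

/-- `A₀ = min_{∅ ≠ P ⊊ {1,…,N}} |Σ_{i∈P} a_i|`. -/
def minProperClusterSum (N : ℕ) (a : Fin N → ℝ) : ℝ :=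
  sInf {b : ℝ | ∃ P : Finset (Fin N), P.Nonempty ∧ P ≠ Finset.univ ∧ b = |∑ i ∈ P, a i|}

/-- `A = min_{∅ ≠ P ⊆ {1,…,N}} |Σ_{i∈P} a_i|`. -/
def minClusterSum (N : ℕ) (a : Fin N → ℝ) : ℝ :=
  sInf {b : ℝ | ∃ P : Finset (Fin N), P.Nonempty ∧ b = |∑ i ∈ P, a i|}

/-- The function `C : ℕ × (ℝ₊)⁵ → ℝ₊` is nondecreasing in each of its six variables
(on nonnegative arguments) and nonnegative. -/
def MonotoneNonnegConstant (C : ℕ → ℝ → ℝ → ℝ → ℝ → ℝ → ℝ) : Prop :=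
  (∀ (n n' : ℕ) (F F' T T' α α' A A' M M' : ℝ),
      n ≤ n' → 0 ≤ F → F ≤ F' → 0 ≤ T → T ≤ T' → 0 ≤ α → α ≤ α' →
      0 ≤ A → A ≤ A' → 0 ≤ M → M ≤ M' →
      C n F T α A M ≤ C n' F' T' α' A' M') ∧
  (∀ (n : ℕ) (F T α A M : ℝ), 0 ≤ F → 0 ≤ T → 0 ≤ α → 0 ≤ A → 0 ≤ M →
      0 ≤ C n F T α A M)

/-- The relative-bound property of `C` from Proposition `prop:borne reformule (i)`:
for every admissible kernel, bounded smooth external field and collapse-free solution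
of the perturbed point-vortex system with `A₀ ≠ 0`, the relative displacements are
bounded by `C(N, ‖f‖_∞, T, a, 1/A₀, sup_{r≥1}|G'|)`. -/
def RelativeBoundProperty (N : ℕ) (C : ℕ → ℝ → ℝ → ℝ → ℝ → ℝ → ℝ) : Prop :=
  ∀ (a : Fin N → ℝ), (∀ i, a i ≠ 0) → minProperClusterSum N a ≠ 0 →
  ∀ G : ℝ → ℝ, KernelRegular G →
  ∀ M : ℝ, 0 ≤ M → (∀ r : ℝ, 1 ≤ r → |deriv G r| ≤ M) →
  ∀ T : ℝ, 0 < T →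
  ∀ f : ℝ → Plane → Plane,
    ContDiffOn ℝ (⊤ : ℕ∞) (fun p : ℝ × Plane => f p.1 p.2) (Set.Ico 0 T ×ˢ Set.univ) →
  ∀ F : ℝ, 0 ≤ F → (∀ t ∈ Set.Ico (0 : ℝ) T, ∀ y : Plane, ‖f t y‖ ≤ F) →
  ∀ x : Fin N → ℝ → Plane, IsPerturbedVortexSolution N a G T f x →
  ∀ t ∈ Set.Ico (0 : ℝ) T, ∀ i j : Fin N,
    ‖(x i t - x j t) - (x i 0 - x j 0)‖ ≤
      C N F T (∑ k : Fin N, |a k|) (1 / minProperClusterSum N a) M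

lemma norm_perp (v : Plane) : ‖perp v‖ = ‖v‖ := by
  simp only [EuclideanSpace.norm_eq, perp, Fin.sum_univ_two]
  simp [Matrix.cons_val_zero, Matrix.cons_val_one]
  ring_nf

lemma perp_neg (v : Plane) : perp (-v) = -(perp v) := by
  ext i
  fin_cases i <;> simp [perp]

lemma gradPerp_neg (K : ℝ → ℝ) (y : Plane) : gradPerp K (-y) = -(gradPerp K y) := by
  simp [gradPerp, perp_neg, norm_neg]

lemma norm_gradPerp_le (K : ℝ → ℝ) (y : Plane) (M : ℝ) (hy : 1 ≤ ‖y‖)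
    (hM : |deriv K ‖y‖| ≤ M) : ‖gradPerp K y‖ ≤ M := by
  have hy0 : (0:ℝ) < ‖y‖ := lt_of_lt_of_le one_pos hy
  have h : ‖gradPerp K y‖ = |deriv K ‖y‖ / ‖y‖| * ‖y‖ := by
    rw [gradPerp, norm_smul, norm_perp]; rfl
  rw [h, abs_div, abs_norm, div_mul_cancel₀ _ (ne_of_gt hy0)]
  exact hM



/-- The recursively defined bounding constant. -/
def Cb : ℕ → ℝ → ℝ → ℝ → ℝ → ℝ → ℝ
  | 0 => fun _ _ _ _ _ => 0
  | (m+1) => fun F T α β M =>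
      Cb m F T α β M +
      4*(m+3)*(α*β*(Cb m (F + α*M) T α β M) + 1) +
      (2*(α*β*(F + α*M) + 1)*T + 2)*(4*α*β*(Cb m (F + α*M) T α β M)) +
      4*(α*β*(F + α*M) + 1)*T

lemma Cb_nonneg : ∀ (m : ℕ) (F T α β M : ℝ), 0 ≤ F → 0 ≤ T → 0 ≤ α → 0 ≤ β → 0 ≤ M →
    0 ≤ Cb m F T α β M := by
  intro m
  induction m with
  | zero => intro F T α β M _ _ _ _ _; simp [Cb]
  | succ m ih =>
    intro F T α β M hF hT hα hβ hM
    have h1 : 0 ≤ F + α*M := by positivity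
    have h2 := ih F T α β M hF hT hα hβ hM
    have h3 := ih (F + α*M) T α β M h1 hT hα hβ hM
    have hV : (0:ℝ) ≤ α*β*(F + α*M) + 1 := by positivity
    simp only [Cb]
    positivity

lemma Cb_mono_args : ∀ (m : ℕ) (F F' T T' α α' β β' M M' : ℝ),
    0 ≤ F → F ≤ F' → 0 ≤ T → T ≤ T' → 0 ≤ α → α ≤ α' → 0 ≤ β → β ≤ β' →
    0 ≤ M → M ≤ M' →
    Cb m F T α β M ≤ Cb m F' T' α' β' M' := by
  intro m
  induction m with
  | zero => intro _ _ _ _ _ _ _ _ _ _ _ _ _ _ _ _ _ _; simp [Cb]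
  | succ m ih =>
    intro F F' T T' α α' β β' M M' hF hFF hT hTT hα hαα hβ hββ hM hMM
    have h1 : 0 ≤ F + α*M := by positivity
    have h1' : F + α*M ≤ F' + α'*M' := by
      have : α*M ≤ α'*M' := mul_le_mul hαα hMM hM (le_trans hα hαα)
      linarith
    have hC1 := ih (F + α*M) (F' + α'*M') T T' α α' β β' M M' h1 h1' hT hTT hα hαα hβ hββ hM hMM
    have hC2 := ih F F' T T' α α' β β' M M' hF hFF hT hTT hα hαα hβ hββ hM hMM
    have hC1n := Cb_nonneg m (F + α*M) T α β M h1 hT hα hβ hM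
    have hC2n := Cb_nonneg m F T α β M hF hT hα hβ hM
    have hα' : 0 ≤ α' := le_trans hα hαα
    have hβ' : 0 ≤ β' := le_trans hβ hββ
    have hM' : 0 ≤ M' := le_trans hM hMM
    have hF' : 0 ≤ F' := le_trans hF hFF
    have hT' : 0 ≤ T' := le_trans hT hTT
    simp only [Cb]
    gcongr <;> positivity

lemma Cb_mono_m : ∀ (m : ℕ) (F T α β M : ℝ), 0 ≤ F → 0 ≤ T → 0 ≤ α → 0 ≤ β → 0 ≤ M →
    Cb m F T α β M ≤ Cb (m+1) F T α β M := by
  intro m F T α β M hF hT hα hβ hM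
  have h1 : 0 ≤ F + α*M := by positivity
  have hC1n := Cb_nonneg m (F + α*M) T α β M h1 hT hα hβ hM
  simp only [Cb]
  have hV : (0:ℝ) ≤ α*β*(F + α*M) + 1 := by positivity
  nlinarith [mul_nonneg (mul_nonneg hα hβ) hC1n, mul_nonneg hV hT]

section Core

variable {N : ℕ}

/-- Internal force on vortex `i` from the vortices in `P`. -/
def intF (a : Fin N → ℝ) (G : ℝ → ℝ) (x : Fin N → ℝ → Plane)
    (P : Finset (Fin N)) (i : Fin N) (s : ℝ) : Plane :=
  ∑ j ∈ P.erase i, a j • gradPerp G (x i s - x j s)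

/-- Weighted center of a cluster. -/
def center (a : Fin N → ℝ) (x : Fin N → ℝ → Plane) (Q : Finset (Fin N)) (s : ℝ) : Plane :=
  (∑ i ∈ Q, a i)⁻¹ • ∑ i ∈ Q, a i • x i s

/-- Antisymmetry cancellation: the internal forces of a cluster sum (weighted) to zero. -/
lemma intF_cancel (a : Fin N → ℝ) (G : ℝ → ℝ) (x : Fin N → ℝ → Plane)
    (Q : Finset (Fin N)) (s : ℝ) :
    ∑ i ∈ Q, a i • intF a G x Q i s = 0 := by
  have h1 : ∑ i ∈ Q, a i • intF a G x Q i s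
      = ∑ p ∈ Q.sigma (fun i => Q.erase i), (a p.1 * a p.2) • gradPerp G (x p.1 s - x p.2 s) := by
    rw [Finset.sum_sigma]
    apply Finset.sum_congr rfl
    intro i _
    rw [intF, Finset.smul_sum]
    apply Finset.sum_congr rfl
    intro j _
    rw [smul_smul]
  rw [h1]
  apply Finset.sum_involution (fun p _ => ⟨p.2, p.1⟩)
  · intro p hp
    have hji : gradPerp G (x p.2 s - x p.1 s) = -(gradPerp G (x p.1 s - x p.2 s)) := by
      rw [← neg_sub, gradPerp_neg]
    simp only [hji, smul_neg]
    rw [mul_comm]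
    exact add_neg_cancel _
  · intro p hp _
    simp only [Finset.mem_sigma, Finset.mem_erase] at hp
    intro hcontr
    have := congrArg Sigma.fst hcontr
    simp at this
    exact hp.2.1 this
  · intro p hp; rfl
  · intro p hp
    simp only [Finset.mem_sigma, Finset.mem_erase] at hp ⊢
    exact ⟨hp.2.2, hp.2.1.symm, hp.1⟩


/-- Splitting the force sum over a sub-cluster: the extra terms come from `P \ Q` and are
bounded by `α * M` when the sub-cluster is 1-separated from the rest. -/
lemma intF_split_le (a : Fin N → ℝ) (G : ℝ → ℝ) (x : Fin N → ℝ → Plane)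
    {α M : ℝ} (hM : 0 ≤ M) (hGM : ∀ r : ℝ, 1 ≤ r → |deriv G r| ≤ M)
    (hα : ∑ k, |a k| ≤ α)
    {P Q : Finset (Fin N)} (hQP : Q ⊆ P) {i : Fin N} (hi : i ∈ Q) {s : ℝ}
    (hval : ∀ p ∈ Q, ∀ q ∈ P \ Q, (1:ℝ) ≤ ‖x p s - x q s‖) :
    ‖intF a G x P i s - intF a G x Q i s‖ ≤ α * M := by
  have hsplit : P.erase i = (Q.erase i) ∪ (P \ Q) := by
    ext w
    simp only [Finset.mem_erase, Finset.mem_union, Finset.mem_sdiff]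
    constructor
    · rintro ⟨hwi, hwP⟩
      by_cases hwQ : w ∈ Q
      · exact Or.inl ⟨hwi, hwQ⟩
      · exact Or.inr ⟨hwP, hwQ⟩
    · rintro (⟨hwi, hwQ⟩ | ⟨hwP, hwQ⟩)
      · exact ⟨hwi, hQP hwQ⟩
      · exact ⟨fun h => hwQ (h ▸ hi), hwP⟩
  have hdisj : Disjoint (Q.erase i) (P \ Q) := by
    apply Finset.disjoint_left.2
    intro w hw hw'
    simp only [Finset.mem_erase] at hw
    simp only [Finset.mem_sdiff] at hw'
    exact hw'.2 hw.2
  have heq : intF a G x P i s - intF a G x Q i s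
      = ∑ j ∈ P \ Q, a j • gradPerp G (x i s - x j s) := by
    rw [intF, intF, hsplit, Finset.sum_union hdisj]
    abel
  rw [heq]
  calc ‖∑ j ∈ P \ Q, a j • gradPerp G (x i s - x j s)‖
      ≤ ∑ j ∈ P \ Q, ‖a j • gradPerp G (x i s - x j s)‖ := norm_sum_le _ _
    _ ≤ ∑ j ∈ P \ Q, |a j| * M := by
        apply Finset.sum_le_sum
        intro j hj
        rw [norm_smul, Real.norm_eq_abs]
        have h1 : (1:ℝ) ≤ ‖x i s - x j s‖ := hval i hi j hj
        exact mul_le_mul_of_nonneg_left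
          (norm_gradPerp_le G _ M h1 (hGM _ h1)) (abs_nonneg _)
    _ ≤ α * M := by
        rw [← Finset.sum_mul]
        apply mul_le_mul_of_nonneg_right _ hM
        calc ∑ j ∈ P \ Q, |a j| ≤ ∑ k, |a k| :=
              Finset.sum_le_sum_of_subset_of_nonneg (Finset.subset_univ _)
                (fun k _ _ => abs_nonneg _)
          _ ≤ α := hα

/-- The center of a cluster has the expected derivative. -/
lemma center_hasDeriv (a : Fin N → ℝ) (x v : Fin N → ℝ → Plane)
    (Q : Finset (Fin N)) {I : Set ℝ} {w : ℝ}
    (hdiff : ∀ i ∈ Q, HasDerivWithinAt (x i) (v i w) I w) :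
    HasDerivWithinAt (center a x Q) ((∑ i ∈ Q, a i)⁻¹ • ∑ i ∈ Q, a i • v i w) I w := by
  apply HasDerivWithinAt.fun_const_smul
  exact HasDerivWithinAt.fun_sum (fun i hi => (hdiff i hi).const_smul (a i))

/-- Norm bound on the derivative of a cluster's center, using the internal cancellation. -/
lemma center_deriv_norm_le (a : Fin N → ℝ) (G : ℝ → ℝ) (x v : Fin N → ℝ → Plane)
    {α β M A₀ FP : ℝ} (hM : 0 ≤ M) (hGM : ∀ r : ℝ, 1 ≤ r → |deriv G r| ≤ M)
    (hα : ∑ k, |a k| ≤ α) (hA₀ : 0 < A₀) (hβ : 1 / A₀ ≤ β) (hFP : 0 ≤ FP)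
    {P Q : Finset (Fin N)} (hQP : Q ⊆ P) (hSQ : A₀ ≤ |∑ i ∈ Q, a i|) {s : ℝ}
    (hval : ∀ p ∈ Q, ∀ q ∈ P \ Q, (1:ℝ) ≤ ‖x p s - x q s‖)
    (hforce : ∀ i ∈ P, ‖v i s - intF a G x P i s‖ ≤ FP) :
    ‖(∑ i ∈ Q, a i)⁻¹ • ∑ i ∈ Q, a i • v i s‖ ≤ β * (α * (FP + α * M)) := by
  set S := ∑ i ∈ Q, a i with hS
  have hSne : S ≠ 0 := by
    intro h
    rw [h] at hSQ
    simp at hSQ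
    exact absurd hSQ (not_le.2 hA₀)
  have hkey : ∑ i ∈ Q, a i • v i s = ∑ i ∈ Q, a i • (v i s - intF a G x Q i s) := by
    rw [← sub_eq_zero]
    have : ∑ i ∈ Q, a i • v i s - ∑ i ∈ Q, a i • (v i s - intF a G x Q i s)
        = ∑ i ∈ Q, a i • intF a G x Q i s := by
      rw [← Finset.sum_sub_distrib]
      apply Finset.sum_congr rfl
      intro i _
      rw [← smul_sub]
      congr 1
      abel
    rw [this, intF_cancel]
  have hterm : ∀ i ∈ Q, ‖v i s - intF a G x Q i s‖ ≤ FP + α * M := by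
    intro i hi
    calc ‖v i s - intF a G x Q i s‖
        ≤ ‖v i s - intF a G x P i s‖ + ‖intF a G x P i s - intF a G x Q i s‖ := by
          have : v i s - intF a G x Q i s
              = (v i s - intF a G x P i s) + (intF a G x P i s - intF a G x Q i s) := by abel
          rw [this]; exact norm_add_le _ _
      _ ≤ FP + α * M := add_le_add (hforce i (hQP hi))
          (intF_split_le a G x hM hGM hα hQP hi hval)
  have hsum : ‖∑ i ∈ Q, a i • v i s‖ ≤ α * (FP + α * M) := by
    rw [hkey]
    calc ‖∑ i ∈ Q, a i • (v i s - intF a G x Q i s)‖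
        ≤ ∑ i ∈ Q, ‖a i • (v i s - intF a G x Q i s)‖ := norm_sum_le _ _
      _ ≤ ∑ i ∈ Q, |a i| * (FP + α * M) := by
          apply Finset.sum_le_sum
          intro i hi
          rw [norm_smul, Real.norm_eq_abs]
          exact mul_le_mul_of_nonneg_left (hterm i hi) (abs_nonneg _)
      _ ≤ α * (FP + α * M) := by
          rw [← Finset.sum_mul]
          have hαM : 0 ≤ FP + α * M := by
            have h0α : 0 ≤ α := le_trans (Finset.sum_nonneg fun k _ => abs_nonneg _) hα
            positivity
          apply mul_le_mul_of_nonneg_right _ hαM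
          calc ∑ i ∈ Q, |a i| ≤ ∑ k, |a k| :=
                Finset.sum_le_sum_of_subset_of_nonneg (Finset.subset_univ _)
                  (fun k _ _ => abs_nonneg _)
            _ ≤ α := hα
  rw [norm_smul, Real.norm_eq_abs, abs_inv]
  have hSpos : 0 < |S| := lt_of_lt_of_le hA₀ hSQ
  have h1 : |S|⁻¹ ≤ β := by
    rw [inv_eq_one_div]
    calc 1/|S| ≤ 1/A₀ := by
          apply div_le_div_of_nonneg_left one_pos.le hA₀ hSQ
      _ ≤ β := hβ
  exact mul_le_mul h1 hsum (norm_nonneg _) (le_trans (inv_nonneg.2 hSpos.le) h1)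


/-- Drift bound for a cluster center over a time interval where it is 1-separated
from the rest of `P`. -/
lemma center_drift (a : Fin N → ℝ) (G : ℝ → ℝ) (x v : Fin N → ℝ → Plane)
    {α β M A₀ FP : ℝ} (hM : 0 ≤ M) (hGM : ∀ r : ℝ, 1 ≤ r → |deriv G r| ≤ M)
    (hα : ∑ k, |a k| ≤ α) (hA₀ : 0 < A₀) (hβ : 1 / A₀ ≤ β) (hFP : 0 ≤ FP)
    {P Q : Finset (Fin N)} (hQP : Q ⊆ P) (hSQ : A₀ ≤ |∑ i ∈ Q, a i|)
    {t₀ t₁ : ℝ}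
    (hdiff : ∀ i ∈ Q, ∀ s ∈ Set.Icc t₀ t₁, HasDerivWithinAt (x i) (v i s) (Set.Icc t₀ t₁) s)
    (hval : ∀ s ∈ Set.Icc t₀ t₁, ∀ p ∈ Q, ∀ q ∈ P \ Q, (1:ℝ) ≤ ‖x p s - x q s‖)
    (hforce : ∀ i ∈ P, ∀ s ∈ Set.Icc t₀ t₁, ‖v i s - intF a G x P i s‖ ≤ FP)
    {w₁ w₂ : ℝ} (hw₁ : w₁ ∈ Set.Icc t₀ t₁) (hw₂ : w₂ ∈ Set.Icc t₀ t₁) :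
    ‖center a x Q w₂ - center a x Q w₁‖ ≤ (β * (α * (FP + α * M))) * |w₂ - w₁| := by
  have := Convex.norm_image_sub_le_of_norm_hasDerivWithin_le
    (f := center a x Q) (f' := fun s => (∑ i ∈ Q, a i)⁻¹ • ∑ i ∈ Q, a i • v i s)
    (s := Set.Icc t₀ t₁) (C := β * (α * (FP + α * M)))
    (fun s hs => center_hasDeriv a x v Q (fun i hi => hdiff i hi s hs))
    (fun s hs => center_deriv_norm_le a G x v hM hGM hα hA₀ hβ hFP hQP hSQ
      (hval s hs) (fun i hi => hforce i hi s hs))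
    (convex_Icc t₀ t₁) hw₁ hw₂
  simpa [Real.norm_eq_abs] using this

/-- Representation of the relative position w.r.t. a cluster's center. -/
lemma sub_center_eq (a : Fin N → ℝ) (x : Fin N → ℝ → Plane)
    {Q : Finset (Fin N)} (hS : (∑ i ∈ Q, a i) ≠ 0) {i : Fin N} (w : ℝ) :
    x i w - center a x Q w = (∑ k ∈ Q, a k)⁻¹ • ∑ k ∈ Q, a k • (x i w - x k w) := by
  have h1 : ∑ k ∈ Q, a k • (x i w - x k w)
      = (∑ k ∈ Q, a k) • x i w - ∑ k ∈ Q, a k • x k w := by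
    rw [Finset.sum_smul, ← Finset.sum_sub_distrib]
    apply Finset.sum_congr rfl
    intro k _
    rw [smul_sub]
  rw [h1, smul_sub, center, inv_smul_smul₀ hS]

/-- Displacement of the relative position w.r.t. a cluster's center, in terms of the
pairwise displacements. -/
lemma sub_center_disp (a : Fin N → ℝ) (x : Fin N → ℝ → Plane)
    {α β A₀ C' : ℝ} (hα : ∑ k, |a k| ≤ α) (hA₀ : 0 < A₀) (hβ : 1 / A₀ ≤ β) (hC' : 0 ≤ C')
    {Q : Finset (Fin N)} (hSQ : A₀ ≤ |∑ i ∈ Q, a i|) {i : Fin N} {s w : ℝ}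
    (hpair : ∀ k ∈ Q, ‖(x i w - x k w) - (x i s - x k s)‖ ≤ C') :
    ‖(x i w - center a x Q w) - (x i s - center a x Q s)‖ ≤ β * (α * C') := by
  set S := ∑ k ∈ Q, a k with hSdef
  have hSne : S ≠ 0 := by
    intro h
    rw [h] at hSQ; simp at hSQ; exact absurd hSQ (not_le.2 hA₀)
  rw [sub_center_eq a x hSne, sub_center_eq a x hSne, ← smul_sub, ← Finset.sum_sub_distrib]
  have hterm : ∀ k ∈ Q, a k • (x i w - x k w) - a k • (x i s - x k s)
      = a k • ((x i w - x k w) - (x i s - x k s)) := by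
    intro k _; simp only [smul_sub]; try abel
  rw [norm_smul, Real.norm_eq_abs, abs_inv]
  have hSpos : 0 < |S| := lt_of_lt_of_le hA₀ hSQ
  have h1 : |S|⁻¹ ≤ β := by
    rw [inv_eq_one_div]
    calc 1/|S| ≤ 1/A₀ := div_le_div_of_nonneg_left one_pos.le hA₀ hSQ
      _ ≤ β := hβ
  have h2 : ‖∑ k ∈ Q, (a k • (x i w - x k w) - a k • (x i s - x k s))‖ ≤ α * C' := by
    calc ‖∑ k ∈ Q, (a k • (x i w - x k w) - a k • (x i s - x k s))‖
        ≤ ∑ k ∈ Q, ‖a k • (x i w - x k w) - a k • (x i s - x k s)‖ := norm_sum_le _ _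
      _ ≤ ∑ k ∈ Q, |a k| * C' := by
          apply Finset.sum_le_sum
          intro k hk
          rw [hterm k hk, norm_smul, Real.norm_eq_abs]
          exact mul_le_mul_of_nonneg_left (hpair k hk) (abs_nonneg _)
      _ ≤ α * C' := by
          rw [← Finset.sum_mul]
          apply mul_le_mul_of_nonneg_right _ hC'
          calc ∑ k ∈ Q, |a k| ≤ ∑ k, |a k| :=
                Finset.sum_le_sum_of_subset_of_nonneg (Finset.subset_univ _)
                  (fun k _ _ => abs_nonneg _)
            _ ≤ α := hα
  calc |S|⁻¹ * ‖∑ k ∈ Q, (a k • (x i w - x k w) - a k • (x i s - x k s))‖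
      ≤ β * (α * C') := mul_le_mul h1 h2 (norm_nonneg _)
        (le_trans (inv_nonneg.2 hSpos.le) h1)


/-- Splitting a configuration whose diameter (witnessed by the pair `i`, `j`) is large:
there is a sub-cluster containing `i` but not `j`, `2H`-separated from its complement. -/
lemma pigeonhole_split (x : Fin N → ℝ → Plane) {P : Finset (Fin N)} {i j : Fin N}
    (hi : i ∈ P) (hj : j ∈ P) {m : ℕ} (hcard : P.card ≤ m + 1) {H s : ℝ} (hH : 0 < H)
    (hr : 2*H*(m+3) ≤ ‖x i s - x j s‖) :
    ∃ Q : Finset (Fin N), Q ⊆ P ∧ i ∈ Q ∧ j ∈ P \ Q ∧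
      (∀ p ∈ Q, ∀ q ∈ P \ Q, 2*H ≤ ‖x p s - x q s‖) := by
  classical
  set ρ : Fin N → ℝ := fun q => ‖x q s - x i s‖ with hρ
  set f : Fin N → ℕ := fun q => ⌊ρ q / (2*H)⌋₊ with hf
  have hcard2 : (P.image f).card < (Finset.Icc 1 (m+2)).card := by
    calc (P.image f).card ≤ P.card := Finset.card_image_le
      _ ≤ m + 1 := hcard
      _ < m + 2 := by omega
      _ = (Finset.Icc 1 (m+2)).card := by simp [Nat.card_Icc]
  obtain ⟨k, hk⟩ : ((Finset.Icc 1 (m+2)) \ P.image f).Nonempty := by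
    rw [← Finset.card_pos]
    have := Finset.card_le_card_sdiff_add_card (s := Finset.Icc 1 (m+2)) (t := P.image f)
    omega
  rw [Finset.mem_sdiff, Finset.mem_Icc] at hk
  obtain ⟨⟨hk1, hk2⟩, hknot⟩ := hk
  refine ⟨P.filter (fun q => ρ q < 2*H*k), Finset.filter_subset _ _, ?_, ?_, ?_⟩
  · rw [Finset.mem_filter]
    refine ⟨hi, ?_⟩
    have : ρ i = 0 := by simp [hρ]
    rw [this]
    have : (1:ℝ) ≤ (k:ℝ) := by exact_mod_cast hk1
    nlinarith
  · rw [Finset.mem_sdiff, Finset.mem_filter]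
    refine ⟨hj, ?_⟩
    rintro ⟨-, hjlt⟩
    have hρj : ρ j = ‖x i s - x j s‖ := by rw [hρ]; exact norm_sub_rev _ _
    have hkle : (k:ℝ) ≤ (m:ℝ)+2 := by exact_mod_cast hk2
    have : 2*H*(m+3) ≤ ρ j := by rw [hρj]; exact hr
    nlinarith
  · intro p hp q hq
    rw [Finset.mem_filter] at hp
    rw [Finset.mem_sdiff, Finset.mem_filter] at hq
    obtain ⟨hpP, hplt⟩ := hp
    obtain ⟨hqP, hqnot⟩ := hq
    have hqge : 2*H*k ≤ ρ q := by
      by_contra hcon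
      exact hqnot ⟨hqP, not_le.1 hcon⟩
    -- since `f q ≠ k`, in fact `ρ q ≥ 2H(k+1)`
    have hfq : f q ≠ k := by
      intro h
      exact hknot (Finset.mem_image.2 ⟨q, hqP, h⟩)
    have hq2 : 2*H*(k+1) ≤ ρ q := by
      by_contra hcon
      apply hfq
      rw [hf]
      have h2H : (0:ℝ) < 2*H := by linarith
      rw [Nat.floor_eq_iff (by positivity)]
      constructor
      · rw [le_div_iff₀ h2H]; linarith [hqge]
      · rw [div_lt_iff₀ h2H]
        push_cast
        linarith [not_le.1 hcon]
    have htri : ρ q - ρ p ≤ ‖x p s - x q s‖ := by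
      have h1 := norm_sub_norm_le (x q s - x i s) (x p s - x i s)
      have h2 : (x q s - x i s) - (x p s - x i s) = x q s - x p s := by abel
      rw [h2, norm_sub_rev (x q s) (x p s)] at h1
      exact h1
    nlinarith [hplt, hq2, htri]

/-- Continuity from within and a one-sided bound passes to the closure point. -/
lemma le_of_le_on_within {g : ℝ → ℝ} {S : Set ℝ} {c e : ℝ}
    (hg : ContinuousWithinAt g S e) (hcl : e ∈ closure S)
    (h : ∀ w ∈ S, c ≤ g w) : c ≤ g e := by
  haveI hnb : (nhdsWithin e S).NeBot := mem_closure_iff_nhdsWithin_neBot.1 hcl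
  exact ge_of_tendsto hg.tendsto (eventually_nhdsWithin_of_forall h)

/-- The statement of the key estimate, for clusters of size at most `m`. -/
def CoreStmt (a : Fin N → ℝ) (G : ℝ → ℝ) (x v : Fin N → ℝ → Plane) (α β M : ℝ) (m : ℕ) : Prop :=
  ∀ P : Finset (Fin N), P.card ≤ m → ∀ FP t₀ t₁ : ℝ, 0 ≤ FP → t₀ ≤ t₁ →
  (∀ i ∈ P, ∀ s ∈ Set.Icc t₀ t₁, HasDerivWithinAt (x i) (v i s) (Set.Icc t₀ t₁) s) →
  (∀ i ∈ P, ∀ s ∈ Set.Icc t₀ t₁, ‖v i s - intF a G x P i s‖ ≤ FP) →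
  ∀ s ∈ Set.Icc t₀ t₁, ∀ i ∈ P, ∀ j ∈ P,
    ‖(x i s - x j s) - (x i t₀ - x j t₀)‖ ≤ Cb m FP (t₁ - t₀) α β M

section Working

variable {a : Fin N → ℝ} {G : ℝ → ℝ} {x v : Fin N → ℝ → Plane} {α β M A₀ : ℝ}

/-- Displacement of the position of a cluster member relative to the cluster center,
during an interval where the cluster is 1-separated from the rest. -/
lemma cluster_internal_disp
    (hM : 0 ≤ M) (hGM : ∀ r : ℝ, 1 ≤ r → |deriv G r| ≤ M)
    (hα : ∑ k, |a k| ≤ α) (hA₀ : 0 < A₀) (hβ : 1 / A₀ ≤ β)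
    (hS : ∀ Q : Finset (Fin N), Q.Nonempty → Q ≠ Finset.univ → A₀ ≤ |∑ i ∈ Q, a i|)
    {m : ℕ} (ih : CoreStmt a G x v α β M m)
    {P Q : Finset (Fin N)} (hQP : Q ⊆ P) (hQne : Q.Nonempty) (hQu : Q ≠ Finset.univ)
    (hcardQ : Q.card ≤ m)
    {FP t₀ t₁ s σ : ℝ} (hFP : 0 ≤ FP) (ht₀s : t₀ ≤ s) (hsσ : s ≤ σ) (hσt₁ : σ ≤ t₁)
    (hdiff : ∀ i ∈ P, ∀ w ∈ Set.Icc t₀ t₁, HasDerivWithinAt (x i) (v i w) (Set.Icc t₀ t₁) w)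
    (hforce : ∀ i ∈ P, ∀ w ∈ Set.Icc t₀ t₁, ‖v i w - intF a G x P i w‖ ≤ FP)
    (hval : ∀ w ∈ Set.Icc s σ, ∀ p ∈ Q, ∀ q ∈ P \ Q, (1:ℝ) ≤ ‖x p w - x q w‖) :
    ∀ w ∈ Set.Icc s σ, ∀ p ∈ Q,
      ‖(x p w - center a x Q w) - (x p s - center a x Q s)‖ ≤
        β * (α * (Cb m (FP + α*M) (t₁ - t₀) α β M)) := by
  have h0α : 0 ≤ α := le_trans (Finset.sum_nonneg fun k _ => abs_nonneg _) hα
  have h0β : 0 ≤ β := le_trans (by positivity) hβ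
  have hsub : Set.Icc s σ ⊆ Set.Icc t₀ t₁ := Set.Icc_subset_Icc ht₀s hσt₁
  have hdiffQ : ∀ i ∈ Q, ∀ w ∈ Set.Icc s σ, HasDerivWithinAt (x i) (v i w) (Set.Icc s σ) w :=
    fun i hi w hw => (hdiff i (hQP hi) w (hsub hw)).mono hsub
  have hforceQ : ∀ i ∈ Q, ∀ w ∈ Set.Icc s σ, ‖v i w - intF a G x Q i w‖ ≤ FP + α * M := by
    intro i hi w hw
    calc ‖v i w - intF a G x Q i w‖
        ≤ ‖v i w - intF a G x P i w‖ + ‖intF a G x P i w - intF a G x Q i w‖ := by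
          have h : v i w - intF a G x Q i w
              = (v i w - intF a G x P i w) + (intF a G x P i w - intF a G x Q i w) := by abel
          rw [h]; exact norm_add_le _ _
      _ ≤ FP + α * M := add_le_add (hforce i (hQP hi) w (hsub hw))
          (intF_split_le a G x hM hGM hα hQP hi (hval w hw))
  have hFPα : 0 ≤ FP + α * M := by positivity
  have hpairs := ih Q hcardQ (FP + α*M) s σ hFPα hsσ hdiffQ hforceQ
  have hCmono : Cb m (FP + α*M) (σ - s) α β M ≤ Cb m (FP + α*M) (t₁ - t₀) α β M :=
    Cb_mono_args m _ _ _ _ _ _ _ _ _ _ hFPα le_rfl (by linarith) (by linarith)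
      h0α le_rfl h0β le_rfl hM le_rfl
  intro w hw p hp
  have hC'0 : 0 ≤ Cb m (FP + α*M) (t₁ - t₀) α β M :=
    Cb_nonneg m _ _ _ _ _ hFPα (by linarith) h0α h0β hM
  apply sub_center_disp a x hα hA₀ hβ hC'0 (hS Q hQne hQu)
  intro k hk
  exact le_trans (hpairs w hw p hp k hk) hCmono

/-- Displacement of the relative position of two vortices lying in the two parts of a
1-separated splitting of `P`, over an interval where the separation persists. -/
lemma pair_disp
    (hM : 0 ≤ M) (hGM : ∀ r : ℝ, 1 ≤ r → |deriv G r| ≤ M)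
    (hα : ∑ k, |a k| ≤ α) (hA₀ : 0 < A₀) (hβ : 1 / A₀ ≤ β)
    (hS : ∀ Q : Finset (Fin N), Q.Nonempty → Q ≠ Finset.univ → A₀ ≤ |∑ i ∈ Q, a i|)
    {m : ℕ} (ih : CoreStmt a G x v α β M m)
    {P Q : Finset (Fin N)} (hQP : Q ⊆ P) (hQne : Q.Nonempty) (hQ'ne : (P \ Q).Nonempty)
    (hQu : Q ≠ Finset.univ) (hQ'u : P \ Q ≠ Finset.univ)
    (hcardQ : Q.card ≤ m) (hcardQ' : (P \ Q).card ≤ m)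
    {FP t₀ t₁ s σ : ℝ} (hFP : 0 ≤ FP) (ht₀s : t₀ ≤ s) (hsσ : s ≤ σ) (hσt₁ : σ ≤ t₁)
    (hdiff : ∀ i ∈ P, ∀ w ∈ Set.Icc t₀ t₁, HasDerivWithinAt (x i) (v i w) (Set.Icc t₀ t₁) w)
    (hforce : ∀ i ∈ P, ∀ w ∈ Set.Icc t₀ t₁, ‖v i w - intF a G x P i w‖ ≤ FP)
    (hval : ∀ w ∈ Set.Icc s σ, ∀ p ∈ Q, ∀ q ∈ P \ Q, (1:ℝ) ≤ ‖x p w - x q w‖) :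
    ∀ w ∈ Set.Icc s σ, ∀ p ∈ Q, ∀ q ∈ P \ Q,
      ‖(x p w - x q w) - (x p s - x q s)‖ ≤
        2 * (β * (α * (Cb m (FP + α*M) (t₁ - t₀) α β M)))
          + 2 * (β * (α * (FP + α * M))) * (w - s) := by
  have hsub : Set.Icc s σ ⊆ Set.Icc t₀ t₁ := Set.Icc_subset_Icc ht₀s hσt₁
  have hQ'P : P \ Q ⊆ P := Finset.sdiff_subset
  have hPQ' : P \ (P \ Q) = Q := Finset.sdiff_sdiff_eq_self hQP
  have hval' : ∀ w ∈ Set.Icc s σ, ∀ p ∈ P \ Q, ∀ q ∈ P \ (P \ Q), (1:ℝ) ≤ ‖x p w - x q w‖ := by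
    intro w hw p hp q hq
    rw [hPQ'] at hq
    rw [norm_sub_rev]
    exact hval w hw q hq p hp
  have hintA := cluster_internal_disp hM hGM hα hA₀ hβ hS ih hQP hQne hQu hcardQ
    hFP ht₀s hsσ hσt₁ hdiff hforce hval
  have hintB := cluster_internal_disp hM hGM hα hA₀ hβ hS ih hQ'P hQ'ne hQ'u hcardQ'
    hFP ht₀s hsσ hσt₁ hdiff hforce hval'
  have hdriftA : ∀ w ∈ Set.Icc s σ,
      ‖center a x Q w - center a x Q s‖ ≤ (β * (α * (FP + α * M))) * (w - s) := by
    intro w hw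
    have h := center_drift a G x v hM hGM hα hA₀ hβ hFP hQP (hS Q hQne hQu)
      (t₀ := s) (t₁ := σ)
      (fun i hi w' hw' => (hdiff i (hQP hi) w' (hsub hw')).mono hsub)
      hval (fun i hi w' hw' => hforce i hi w' (hsub hw'))
      (Set.left_mem_Icc.2 hsσ) hw
    rwa [abs_of_nonneg (by linarith [hw.1])] at h
  have hdriftB : ∀ w ∈ Set.Icc s σ,
      ‖center a x (P \ Q) w - center a x (P \ Q) s‖ ≤ (β * (α * (FP + α * M))) * (w - s) := by
    intro w hw
    have h := center_drift a G x v hM hGM hα hA₀ hβ hFP hQ'P (hS (P \ Q) hQ'ne hQ'u)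
      (t₀ := s) (t₁ := σ)
      (fun i hi w' hw' => (hdiff i (hQ'P hi) w' (hsub hw')).mono hsub)
      hval' (fun i hi w' hw' => hforce i hi w' (hsub hw'))
      (Set.left_mem_Icc.2 hsσ) hw
    rwa [abs_of_nonneg (by linarith [hw.1])] at h
  intro w hw p hp q hq
  have key : (x p w - x q w) - (x p s - x q s)
      = (((x p w - center a x Q w) - (x p s - center a x Q s))
          - ((x q w - center a x (P \ Q) w) - (x q s - center a x (P \ Q) s)))
        + ((center a x Q w - center a x Q s)
          - (center a x (P \ Q) w - center a x (P \ Q) s)) := by abel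
  rw [key]
  calc ‖_ + _‖ ≤ ‖((x p w - center a x Q w) - (x p s - center a x Q s))
          - ((x q w - center a x (P \ Q) w) - (x q s - center a x (P \ Q) s))‖
        + ‖(center a x Q w - center a x Q s)
          - (center a x (P \ Q) w - center a x (P \ Q) s)‖ := norm_add_le _ _
    _ ≤ (‖(x p w - center a x Q w) - (x p s - center a x Q s)‖
          + ‖(x q w - center a x (P \ Q) w) - (x q s - center a x (P \ Q) s)‖)
        + (‖center a x Q w - center a x Q s‖
          + ‖center a x (P \ Q) w - center a x (P \ Q) s‖) :=
        add_le_add (norm_sub_le _ _) (norm_sub_le _ _)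
    _ ≤ (β * (α * (Cb m (FP + α*M) (t₁ - t₀) α β M))
          + β * (α * (Cb m (FP + α*M) (t₁ - t₀) α β M)))
        + ((β * (α * (FP + α * M))) * (w - s) + (β * (α * (FP + α * M))) * (w - s)) := by
        apply add_le_add
        · exact add_le_add (hintA w hw p hp) (hintB w hw q hq)
        · exact add_le_add (hdriftA w hw) (hdriftB w hw)
    _ = 2 * (β * (α * (Cb m (FP + α*M) (t₁ - t₀) α β M)))
          + 2 * (β * (α * (FP + α * M))) * (w - s) := by ring

/-- Closedness of the failure set of a splitting. -/
lemma isClosed_failure (x : Fin N → ℝ → Plane) (P Q : Finset (Fin N)) {t₀ t₁ s e : ℝ}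
    (hsub : Set.Icc s e ⊆ Set.Icc t₀ t₁) (hQP : Q ⊆ P)
    (hcont : ∀ p ∈ P, ContinuousOn (x p) (Set.Icc t₀ t₁)) :
    IsClosed {w | w ∈ Set.Icc s e ∧ ∃ p ∈ Q, ∃ q ∈ P \ Q, ‖x p w - x q w‖ ≤ 1} := by
  have hU2 : {w | w ∈ Set.Icc s e ∧ ∃ p ∈ Q, ∃ q ∈ P \ Q, ‖x p w - x q w‖ ≤ 1}
      = ⋃ p ∈ Q, ⋃ q ∈ P \ Q, (Set.Icc s e ∩ (fun w => ‖x p w - x q w‖) ⁻¹' Set.Iic 1) := by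
    ext w
    simp only [Set.mem_setOf_eq, Set.mem_iUnion, Set.mem_inter_iff, Set.mem_preimage,
      Set.mem_Iic, exists_prop]
    tauto
  rw [hU2]
  apply Set.Finite.isClosed_biUnion (Q.finite_toSet)
  intro p hp
  apply Set.Finite.isClosed_biUnion ((P \ Q).finite_toSet)
  intro q hq
  rw [Finset.mem_coe] at hp hq
  have h1 : ContinuousOn (fun w => ‖x p w - x q w‖) (Set.Icc s e) :=
    (((hcont p (hQP hp)).sub (hcont q (Finset.sdiff_subset hq))).norm).mono hsub
  exact h1.preimage_isClosed_of_isClosed isClosed_Icc isClosed_Iic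

set_option maxHeartbeats 1000000 in
/-- One step of the continuation argument. -/
lemma step_lemma
    (hM : 0 ≤ M) (hGM : ∀ r : ℝ, 1 ≤ r → |deriv G r| ≤ M)
    (hα : ∑ k, |a k| ≤ α) (hA₀ : 0 < A₀) (hβ : 1 / A₀ ≤ β)
    (hS : ∀ Q : Finset (Fin N), Q.Nonempty → Q ≠ Finset.univ → A₀ ≤ |∑ i ∈ Q, a i|)
    {m : ℕ} (ih : CoreStmt a G x v α β M m)
    {P : Finset (Fin N)} {i j : Fin N} (hi : i ∈ P) (hj : j ∈ P) (hcard : P.card ≤ m + 1)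
    {FP t₀ t₁ : ℝ} (hFP : 0 ≤ FP)
    (hdiff : ∀ i ∈ P, ∀ w ∈ Set.Icc t₀ t₁, HasDerivWithinAt (x i) (v i w) (Set.Icc t₀ t₁) w)
    (hforce : ∀ i ∈ P, ∀ w ∈ Set.Icc t₀ t₁, ‖v i w - intF a G x P i w‖ ≤ FP)
    {s e : ℝ} (hts : t₀ ≤ s) (hse : s < e) (het : e ≤ t₁)
    (hrs : 2*((β*(α*(Cb m (FP + α*M) (t₁ - t₀) α β M)))+1)*(m+3) ≤ ‖x i s - x j s‖) :
    ∃ σ ∈ Set.Ioc s e,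
      ‖(x i σ - x j σ) - (x i s - x j s)‖ ≤
          2*(β*(α*(Cb m (FP + α*M) (t₁ - t₀) α β M))) + 2*(β*(α*(FP + α*M)))*(σ - s)
      ∧ (σ = e ∨ 1 ≤ 2*(β*(α*(FP + α*M)))*(σ - s)) := by
  classical
  have h0α : 0 ≤ α := le_trans (Finset.sum_nonneg fun k _ => abs_nonneg _) hα
  have h0β : 0 ≤ β := le_trans (by positivity) hβ
  set C' := Cb m (FP + α*M) (t₁ - t₀) α β M with hC'def
  have hC'0 : 0 ≤ C' := Cb_nonneg m _ _ _ _ _ (by positivity) (by linarith) h0α h0β hM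
  set H := β*(α*C') + 1 with hHdef
  have hH1 : 1 ≤ H := by
    have : 0 ≤ β*(α*C') := by positivity
    linarith
  have hH0 : 0 < H := by linarith
  obtain ⟨Q, hQP, hiQ, hjQ', hgap⟩ := pigeonhole_split x hi hj hcard hH0 hrs
  have hQne : Q.Nonempty := ⟨i, hiQ⟩
  have hQ'ne : (P \ Q).Nonempty := ⟨j, hjQ'⟩
  have hjnQ : j ∉ Q := (Finset.mem_sdiff.1 hjQ').2
  have hinQ' : i ∉ P \ Q := fun h => (Finset.mem_sdiff.1 h).2 hiQ
  have hQu : Q ≠ Finset.univ := fun h => hjnQ (h ▸ Finset.mem_univ j)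
  have hQ'u : P \ Q ≠ Finset.univ := fun h => hinQ' (h ▸ Finset.mem_univ i)
  have hQP' : Q ⊂ P := Finset.ssubset_iff_of_subset hQP |>.2 ⟨j, (Finset.mem_sdiff.1 hjQ').1, hjnQ⟩
  have hcardQ : Q.card ≤ m := by
    have := Finset.card_lt_card hQP'
    omega
  have hcardQ' : (P \ Q).card ≤ m := by
    have h1 : (P \ Q).card = P.card - Q.card := Finset.card_sdiff_of_subset hQP
    have h2 : 1 ≤ Q.card := Finset.card_pos.2 hQne
    omega
  have hcont : ∀ p ∈ P, ∀ q ∈ P, ContinuousOn (fun w => ‖x p w - x q w‖) (Set.Icc t₀ t₁) := by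
    intro p hp q hq
    have h1 : ContinuousOn (x p) (Set.Icc t₀ t₁) :=
      fun w hw => (hdiff p hp w hw).continuousWithinAt
    have h2 : ContinuousOn (x q) (Set.Icc t₀ t₁) :=
      fun w hw => (hdiff q hq w hw).continuousWithinAt
    exact (h1.sub h2).norm
  -- the failure set
  set U : Set ℝ := {w | w ∈ Set.Icc s e ∧ ∃ p ∈ Q, ∃ q ∈ P \ Q, ‖x p w - x q w‖ ≤ 1}
    with hUdef
  have hsubIcc : Set.Icc s e ⊆ Set.Icc t₀ t₁ := Set.Icc_subset_Icc hts het
  have hUclosed : IsClosed U := by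
    apply isClosed_failure x P Q hsubIcc hQP
    intro p hp
    exact fun w hw => (hdiff p hp w hw).continuousWithinAt
  have hsnotU : s ∉ U := by
    rintro ⟨-, p, hp, q, hq, hle⟩
    have := hgap p hp q hq
    linarith
  rcases Set.eq_empty_or_nonempty U with hUe | hUne
  · -- the splitting survives until `e`
    have hval : ∀ w ∈ Set.Icc s e, ∀ p ∈ Q, ∀ q ∈ P \ Q, (1:ℝ) ≤ ‖x p w - x q w‖ := by
      intro w hw p hp q hq
      by_contra hcon
      exact absurd (Set.mem_setOf_eq ▸ ⟨hw, p, hp, q, hq, le_of_lt (not_le.1 hcon)⟩)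
        (hUe ▸ Set.notMem_empty w)
    refine ⟨e, ⟨hse, le_refl e⟩, ?_, Or.inl rfl⟩
    exact pair_disp hM hGM hα hA₀ hβ hS ih hQP hQne hQ'ne hQu hQ'u hcardQ hcardQ'
      hFP hts hse.le het hdiff hforce hval e (Set.right_mem_Icc.2 hse.le) i hiQ j hjQ'
  · -- the splitting fails at time `σ`
    have hbdd : BddBelow U := ⟨s, fun w hw => hw.1.1⟩
    set σ := sInf U with hσdef
    have hσU : σ ∈ U := hUclosed.csInf_mem hUne hbdd
    have hσIcc : σ ∈ Set.Icc s e := hσU.1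
    have hsσ : s < σ := lt_of_le_of_ne hσIcc.1 (fun h => hsnotU (h ▸ hσU))
    have hnotU : ∀ w ∈ Set.Ico s σ, w ∉ U := by
      intro w hw hwU
      exact absurd (csInf_le hbdd hwU) (not_le.2 hw.2)
    have hvalIco : ∀ w ∈ Set.Ico s σ, ∀ p ∈ Q, ∀ q ∈ P \ Q, (1:ℝ) ≤ ‖x p w - x q w‖ := by
      intro w hw p hp q hq
      by_contra hcon
      apply hnotU w hw
      exact ⟨⟨hw.1, le_trans hw.2.le hσIcc.2⟩, p, hp, q, hq, le_of_lt (not_le.1 hcon)⟩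
    have hvalσpt : ∀ p ∈ Q, ∀ q ∈ P \ Q, (1:ℝ) ≤ ‖x p σ - x q σ‖ := by
      intro p hp q hq
      apply le_of_le_on_within (g := fun w => ‖x p w - x q w‖) (S := Set.Ico s σ) (e := σ)
      · apply ContinuousWithinAt.mono
        · exact (hcont p (hQP hp) q (Finset.sdiff_subset hq)).continuousWithinAt
            (hsubIcc hσIcc)
        · exact fun w hw => hsubIcc ⟨hw.1, le_trans hw.2.le hσIcc.2⟩
      · rw [closure_Ico hsσ.ne]
        exact Set.right_mem_Icc.2 hsσ.le
      · exact fun w' hw' => hvalIco w' hw' p hp q hq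
    have hval : ∀ w ∈ Set.Icc s σ, ∀ p ∈ Q, ∀ q ∈ P \ Q, (1:ℝ) ≤ ‖x p w - x q w‖ := by
      intro w hw p hp q hq
      rcases lt_or_eq_of_le hw.2 with hlt | heq
      · exact hvalIco w ⟨hw.1, hlt⟩ p hp q hq
      · rw [heq]
        exact hvalσpt p hp q hq
    have hdisp := pair_disp hM hGM hα hA₀ hβ hS ih hQP hQne hQ'ne hQu hQ'u hcardQ hcardQ'
      hFP hts hsσ.le (le_trans hσIcc.2 het) hdiff hforce hval
    refine ⟨σ, ⟨hsσ, hσIcc.2⟩, hdisp σ (Set.right_mem_Icc.2 hsσ.le) i hiQ j hjQ', Or.inr ?_⟩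
    obtain ⟨-, p₀, hp₀, q₀, hq₀, hle1⟩ := hσU
    have hd := hdisp σ (Set.right_mem_Icc.2 hsσ.le) p₀ hp₀ q₀ hq₀
    have hlow : ‖x p₀ s - x q₀ s‖ - ‖x p₀ σ - x q₀ σ‖
        ≤ ‖(x p₀ σ - x q₀ σ) - (x p₀ s - x q₀ s)‖ := by
      have h := norm_sub_norm_le (x p₀ s - x q₀ s) (x p₀ σ - x q₀ σ)
      rwa [norm_sub_rev (x p₀ s - x q₀ s) (x p₀ σ - x q₀ σ)] at h
    have hgap0 := hgap p₀ hp₀ q₀ hq₀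
    linarith

/-- Iterating the step lemma: bound over a whole stretch where the pair `(i,j)` stays
`Λ`-separated. -/
lemma claim_lemma
    (hM : 0 ≤ M) (hGM : ∀ r : ℝ, 1 ≤ r → |deriv G r| ≤ M)
    (hα : ∑ k, |a k| ≤ α) (hA₀ : 0 < A₀) (hβ : 1 / A₀ ≤ β)
    (hS : ∀ Q : Finset (Fin N), Q.Nonempty → Q ≠ Finset.univ → A₀ ≤ |∑ i ∈ Q, a i|)
    {m : ℕ} (ih : CoreStmt a G x v α β M m)
    {P : Finset (Fin N)} {i j : Fin N} (hi : i ∈ P) (hj : j ∈ P) (hcard : P.card ≤ m + 1)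
    {FP t₀ t₁ : ℝ} (hFP : 0 ≤ FP)
    (hdiff : ∀ i ∈ P, ∀ w ∈ Set.Icc t₀ t₁, HasDerivWithinAt (x i) (v i w) (Set.Icc t₀ t₁) w)
    (hforce : ∀ i ∈ P, ∀ w ∈ Set.Icc t₀ t₁, ‖v i w - intF a G x P i w‖ ≤ FP) :
    ∀ κ : ℕ, ∀ s e : ℝ, t₀ ≤ s → s ≤ e → e ≤ t₁ →
    (∀ w ∈ Set.Ico s e,
      2*((β*(α*(Cb m (FP + α*M) (t₁ - t₀) α β M)))+1)*(m+3) ≤ ‖x i w - x j w‖) →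
    2*(β*(α*(FP + α*M)))*(e - s) ≤ κ →
    ‖(x i e - x j e) - (x i s - x j s)‖ ≤
      (κ+1)*(2*(β*(α*(Cb m (FP + α*M) (t₁ - t₀) α β M))))
        + 2*(β*(α*(FP + α*M)))*(e - s) := by
  have h0α : 0 ≤ α := le_trans (Finset.sum_nonneg fun k _ => abs_nonneg _) hα
  have h0β : 0 ≤ β := le_trans (by positivity) hβ
  intro κ
  induction κ with
  | zero =>
    intro s e hts hse het hr hκ
    rcases eq_or_lt_of_le hse with heq | hlt
    · rw [← heq]
      simp only [sub_self, norm_zero]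
      have hC'0 : 0 ≤ Cb m (FP + α*M) (t₁ - t₀) α β M := by
        apply Cb_nonneg m _ _ _ _ _ (by positivity) _ h0α h0β hM
        linarith [le_trans hts (le_trans hse het)]
      positivity
    · obtain ⟨σ, hσIoc, hbound, halt⟩ := step_lemma hM hGM hα hA₀ hβ hS ih hi hj hcard hFP
        hdiff hforce hts hlt het (hr s ⟨le_rfl, hlt⟩)
      have hV0 : 0 ≤ 2*(β*(α*(FP + α*M))) := by positivity
      rcases halt with heq | hge
      · rw [← heq]
        push_cast
        linarith [hbound]
      · exfalso
        have h1 : 2*(β*(α*(FP + α*M)))*(σ - s) ≤ 2*(β*(α*(FP + α*M)))*(e - s) := by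
          apply mul_le_mul_of_nonneg_left _ hV0
          linarith [hσIoc.2]
        push_cast at hκ
        linarith
  | succ κ ihκ =>
    intro s e hts hse het hr hκ
    rcases eq_or_lt_of_le hse with heq | hlt
    · rw [← heq]
      simp only [sub_self, norm_zero]
      have hC'0 : 0 ≤ Cb m (FP + α*M) (t₁ - t₀) α β M := by
        apply Cb_nonneg m _ _ _ _ _ (by positivity) _ h0α h0β hM
        linarith [le_trans hts (le_trans hse het)]
      positivity
    · obtain ⟨σ, hσIoc, hbound, halt⟩ := step_lemma hM hGM hα hA₀ hβ hS ih hi hj hcard hFP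
        hdiff hforce hts hlt het (hr s ⟨le_rfl, hlt⟩)
      have hC'0 : 0 ≤ Cb m (FP + α*M) (t₁ - t₀) α β M := by
        apply Cb_nonneg m _ _ _ _ _ (by positivity) _ h0α h0β hM
        linarith [le_trans hts (le_trans hse het)]
      have hV0 : 0 ≤ 2*(β*(α*(FP + α*M))) := by positivity
      rcases halt with heq | hge
      · rw [← heq]
        have hκ1 : (1:ℝ) ≤ (κ:ℝ) + 1 + 1 := by
          have : (0:ℝ) ≤ (κ:ℝ) := Nat.cast_nonneg κ
          linarith
        have hD0 : 0 ≤ 2*(β*(α*(Cb m (FP + α*M) (t₁ - t₀) α β M))) := by positivity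
        push_cast
        nlinarith [hbound, hσIoc.2]
      · -- recurse from σ
        have h1 : 2*(β*(α*(FP + α*M)))*(σ - s) ≤ 2*(β*(α*(FP + α*M)))*(e - s) := by
          apply mul_le_mul_of_nonneg_left _ hV0
          linarith [hσIoc.2]
        have hrec := ihκ σ e (le_trans hts hσIoc.1.le) hσIoc.2 het
          (fun w hw => hr w ⟨le_trans hσIoc.1.le hw.1, hw.2⟩)
          (by push_cast at hκ ⊢; nlinarith)
        have htri : ‖(x i e - x j e) - (x i s - x j s)‖ ≤
            ‖(x i e - x j e) - (x i σ - x j σ)‖ + ‖(x i σ - x j σ) - (x i s - x j s)‖ := by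
          have hd : (x i e - x j e) - (x i s - x j s)
              = ((x i e - x j e) - (x i σ - x j σ)) + ((x i σ - x j σ) - (x i s - x j s)) := by
            abel
          rw [hd]; exact norm_add_le _ _
        push_cast at hrec ⊢
        nlinarith [hbound, hrec, htri]

set_option maxHeartbeats 1000000 in
/-- The key estimate holds for all cluster sizes. -/
lemma core_holds
    (hM : 0 ≤ M) (hGM : ∀ r : ℝ, 1 ≤ r → |deriv G r| ≤ M)
    (hα : ∑ k, |a k| ≤ α) (hA₀ : 0 < A₀) (hβ : 1 / A₀ ≤ β)
    (hS : ∀ Q : Finset (Fin N), Q.Nonempty → Q ≠ Finset.univ → A₀ ≤ |∑ i ∈ Q, a i|) :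
    ∀ m : ℕ, CoreStmt a G x v α β M m := by
  have h0α : 0 ≤ α := le_trans (Finset.sum_nonneg fun k _ => abs_nonneg _) hα
  have h0β : 0 ≤ β := le_trans (by positivity) hβ
  intro m
  induction m with
  | zero =>
    intro P hcard FP t₀ t₁ hFP ht hdiff hforce s hs i hi j hj
    rw [Finset.card_eq_zero.1 (Nat.le_zero.1 hcard)] at hi
    exact absurd hi (Finset.notMem_empty i)
  | succ m ihm =>
    intro P hcard FP t₀ t₁ hFP ht hdiff hforce sf hsf i hi j hj
    have hT'0 : 0 ≤ t₁ - t₀ := by linarith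
    set C' := Cb m (FP + α*M) (t₁ - t₀) α β M with hC'def
    have hC'0 : 0 ≤ C' := Cb_nonneg m _ _ _ _ _ (by positivity) hT'0 h0α h0β hM
    set D' : ℝ := β*(α*C') with hD'def
    have hD'0 : 0 ≤ D' := by rw [hD'def]; positivity
    set Λ : ℝ := 2*(D'+1)*(m+3) with hΛdef
    have hΛ0 : 0 < Λ := by
      rw [hΛdef]
      have : (0:ℝ) < (m:ℝ)+3 := by positivity
      nlinarith
    set V0 : ℝ := β*(α*(FP + α*M)) with hV0def
    have hV00 : 0 ≤ V0 := by rw [hV0def]; positivity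
    set κ0 : ℕ := ⌈2*V0*(t₁ - t₀)⌉₊ with hκ0def
    have hκge : 2*V0*(t₁ - t₀) ≤ κ0 := Nat.le_ceil _
    have hκle : (κ0:ℝ) ≤ 2*V0*(t₁ - t₀) + 1 := by
      rw [hκ0def]
      exact (Nat.ceil_lt_add_one (by positivity)).le
    set B : ℝ := ((κ0:ℝ)+1)*(2*D') + 2*V0*(t₁ - t₀) with hBdef
    have hB0 : 0 ≤ B := by
      rw [hBdef]
      have : (0:ℝ) ≤ (κ0:ℝ) := Nat.cast_nonneg _
      nlinarith
    -- the bound over a Λ-separated stretch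
    have hstretch : ∀ s e : ℝ, t₀ ≤ s → s ≤ e → e ≤ t₁ →
        (∀ w ∈ Set.Ico s e, Λ ≤ ‖x i w - x j w‖) →
        ‖(x i e - x j e) - (x i s - x j s)‖ ≤ B := by
      intro s e hts hse het hr
      have hcl := claim_lemma hM hGM hα hA₀ hβ hS ihm hi hj hcard hFP hdiff hforce κ0
        s e hts hse het hr
        (by
          have h1 : 2*V0*(e - s) ≤ 2*V0*(t₁ - t₀) := by
            apply mul_le_mul_of_nonneg_left _ (by positivity)
            linarith
          rw [← hV0def]
          linarith)
      rw [hBdef, hD'def, hC'def]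
      have h2 : 2*(β*(α*(FP + α*M)))*(e - s) ≤ 2*V0*(t₁ - t₀) := by
        rw [← hV0def]
        apply mul_le_mul_of_nonneg_left _ (by positivity)
        linarith
      calc ‖(x i e - x j e) - (x i s - x j s)‖
          ≤ ((κ0:ℝ)+1)*(2*(β*(α*(Cb m (FP + α*M) (t₁ - t₀) α β M))))
            + 2*(β*(α*(FP + α*M)))*(e - s) := hcl
        _ ≤ ((κ0:ℝ)+1)*(2*(β*(α*(Cb m (FP + α*M) (t₁ - t₀) α β M)))) + 2*V0*(t₁ - t₀) := by
            linarith
    -- continuity of the pair distance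
    have hrcont : ContinuousOn (fun w => ‖x i w - x j w‖) (Set.Icc t₀ t₁) := by
      have h1 : ContinuousOn (x i) (Set.Icc t₀ t₁) :=
        fun w hw => (hdiff i hi w hw).continuousWithinAt
      have h2 : ContinuousOn (x j) (Set.Icc t₀ t₁) :=
        fun w hw => (hdiff j hj w hw).continuousWithinAt
      exact (h1.sub h2).norm
    have hsubf : Set.Icc t₀ sf ⊆ Set.Icc t₀ t₁ := Set.Icc_subset_Icc le_rfl hsf.2
    -- the set of times in `[t₀, sf]` where the pair is at distance `≤ Λ`
    set E : Set ℝ := Set.Icc t₀ sf ∩ (fun w => ‖x i w - x j w‖) ⁻¹' Set.Iic Λ with hEdef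
    have hEclosed : IsClosed E :=
      (hrcont.mono hsubf).preimage_isClosed_of_isClosed isClosed_Icc isClosed_Iic
    -- final numeric bound
    have hfinal : B + 2*Λ + B ≤ Cb (m+1) FP (t₁ - t₀) α β M := by
      have hCm0 : 0 ≤ Cb m FP (t₁ - t₀) α β M := Cb_nonneg m _ _ _ _ _ hFP hT'0 h0α h0β hM
      have hE1 : D' = α*β*C' := by rw [hD'def]; ring
      have hE2 : V0 = α*β*(FP + α*M) := by rw [hV0def]; ring
      have hBle : B ≤ (2*V0*(t₁ - t₀)+2)*(2*D') + 2*V0*(t₁ - t₀) := by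
        rw [hBdef]
        have := mul_le_mul_of_nonneg_right
          (show (κ0:ℝ)+1 ≤ 2*V0*(t₁ - t₀)+2 by linarith)
          (show (0:ℝ) ≤ 2*D' by positivity)
        linarith
      simp only [Cb]
      rw [← hC'def, ← hE1, ← hE2, hΛdef]
      nlinarith [mul_nonneg hV00 hT'0, mul_nonneg hD'0 (mul_nonneg hV00 hT'0)]
    rcases Set.eq_empty_or_nonempty E with hEe | hEne
    · -- the pair stays Λ-separated on the whole interval
      have hr : ∀ w ∈ Set.Ico t₀ sf, Λ ≤ ‖x i w - x j w‖ := by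
        intro w hw
        by_contra hcon
        have hwE : w ∈ E := ⟨⟨hw.1, hw.2.le⟩, le_of_lt (not_le.1 hcon)⟩
        rw [hEe] at hwE
        exact hwE
      have := hstretch t₀ sf le_rfl hsf.1 hsf.2 hr
      calc ‖(x i sf - x j sf) - (x i t₀ - x j t₀)‖ ≤ B := this
        _ ≤ Cb (m+1) FP (t₁ - t₀) α β M := by linarith
    · have hbddB : BddBelow E := ⟨t₀, fun w hw => hw.1.1⟩
      have hbddA : BddAbove E := ⟨sf, fun w hw => hw.1.2⟩
      set u := sSup E with hudef
      set vv := sInf E with hvdef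
      have huE : u ∈ E := hEclosed.csSup_mem hEne hbddA
      have hvE : vv ∈ E := hEclosed.csInf_mem hEne hbddB
      have hvu : vv ≤ u := csInf_le_csSup hEne hbddB hbddA
      have htv : t₀ ≤ vv := hvE.1.1
      have hus : u ≤ sf := huE.1.2
      have hrv : ‖x i vv - x j vv‖ ≤ Λ := hvE.2
      have hru : ‖x i u - x j u‖ ≤ Λ := huE.2
      have hrleft : ∀ w ∈ Set.Ico t₀ vv, Λ ≤ ‖x i w - x j w‖ := by
        intro w hw
        by_contra hcon
        have hwE : w ∈ E := ⟨⟨hw.1, le_trans hw.2.le (le_trans hvu hus)⟩,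
          le_of_lt (not_le.1 hcon)⟩
        exact absurd (csInf_le hbddB hwE) (not_le.2 hw.2)
      have hu_t0 : t₀ ≤ u := le_trans htv hvu
      have hu_t1 : u ≤ t₁ := le_trans hus hsf.2
      have hrright : ∀ w ∈ Set.Ico u sf, Λ ≤ ‖x i w - x j w‖ := by
        intro w hw
        have hus' : u < sf := lt_of_le_of_lt hw.1 hw.2
        rcases eq_or_lt_of_le hw.1 with heq | hlt
        · rw [← heq]
          apply le_of_le_on_within (g := fun w => ‖x i w - x j w‖) (S := Set.Ioc u sf) (e := u)
          · exact (hrcont.continuousWithinAt ⟨hu_t0, hu_t1⟩).mono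
              (fun w' hw' => ⟨le_trans hu_t0 hw'.1.le, le_trans hw'.2 hsf.2⟩)
          · rw [closure_Ioc hus'.ne]
            exact Set.left_mem_Icc.2 hus'.le
          · intro w' hw'
            by_contra hcon
            have hwE : w' ∈ E := ⟨⟨le_trans hu_t0 hw'.1.le, hw'.2⟩,
              le_of_lt (not_le.1 hcon)⟩
            exact absurd (le_csSup hbddA hwE) (not_le.2 hw'.1)
        · by_contra hcon
          have hwE : w ∈ E := ⟨⟨le_trans hu_t0 hlt.le, hw.2.le⟩,
            le_of_lt (not_le.1 hcon)⟩
          exact absurd (le_csSup hbddA hwE) (not_le.2 hlt)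
      have hBleft := hstretch t₀ vv le_rfl htv (le_trans (le_trans hvu hus) hsf.2) hrleft
      have hBright := hstretch u sf hu_t0 hus hsf.2 hrright
      have hmid : ‖(x i u - x j u) - (x i vv - x j vv)‖ ≤ 2*Λ := by
        calc ‖(x i u - x j u) - (x i vv - x j vv)‖
            ≤ ‖x i u - x j u‖ + ‖x i vv - x j vv‖ := norm_sub_le _ _
          _ ≤ 2*Λ := by linarith
      have htri : ‖(x i sf - x j sf) - (x i t₀ - x j t₀)‖ ≤
          ‖(x i sf - x j sf) - (x i u - x j u)‖ + ‖(x i u - x j u) - (x i vv - x j vv)‖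
            + ‖(x i vv - x j vv) - (x i t₀ - x j t₀)‖ := by
        have hd : (x i sf - x j sf) - (x i t₀ - x j t₀)
            = (((x i sf - x j sf) - (x i u - x j u)) + ((x i u - x j u) - (x i vv - x j vv)))
              + ((x i vv - x j vv) - (x i t₀ - x j t₀)) := by abel
        rw [hd]
        refine le_trans (norm_add_le _ _) ?_
        have := norm_add_le ((x i sf - x j sf) - (x i u - x j u))
          ((x i u - x j u) - (x i vv - x j vv))
        linarith
      linarith [hBleft, hBright, hmid, htri, hfinal]

end Working
end Core


/-- Relative bound for the perturbed point-vortex system: there is a function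
`C : ℕ × (ℝ₊)⁵ → ℝ₊`, nondecreasing in each of its six variables, bounding
`|(x_i(t) − x_j(t)) − (x_i(0) − x_j(0))|` by `C(N, ‖f‖_∞, T, a, 1/A₀, sup_{r≥1}|G'|)`
whenever `A₀ ≠ 0`. -/
theorem perturbed_relative_bound (N : ℕ) (hN : 1 ≤ N) :
    ∃ C : ℕ → ℝ → ℝ → ℝ → ℝ → ℝ → ℝ,
      MonotoneNonnegConstant C ∧ RelativeBoundProperty N C := by
  refine ⟨Cb, ⟨?_, fun n F T α A M hF hT hα hA hM => Cb_nonneg n F T α A M hF hT hα hA hM⟩, ?_⟩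
  · -- monotonicity
    intro n n' F F' T T' α α' A A' M M' hnn hF hFF hT hTT hα hαα hA hAA hM hMM
    have h1 : Cb n F T α A M ≤ Cb n F' T' α' A' M' :=
      Cb_mono_args n F F' T T' α α' A A' M M' hF hFF hT hTT hα hαα hA hAA hM hMM
    have h2 : Cb n F' T' α' A' M' ≤ Cb n' F' T' α' A' M' := by
      have hF' : 0 ≤ F' := le_trans hF hFF
      have hT' : 0 ≤ T' := le_trans hT hTT
      have hα' : 0 ≤ α' := le_trans hα hαα
      have hA' : 0 ≤ A' := le_trans hA hAA
      have hM' : 0 ≤ M' := le_trans hM hMM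
      have hmono : Monotone (fun k => Cb k F' T' α' A' M') :=
        monotone_nat_of_le_succ (fun k => Cb_mono_m k F' T' α' A' M' hF' hT' hα' hA' hM')
      exact hmono hnn
    exact le_trans h1 h2
  · -- the relative bound property
    intro a ha hA₀ne G hKreg M hM hGM T hT f hf F hF hfb x hsol t ht i j
    classical
    -- the set defining `A₀`
    set SS : Set ℝ :=
      {b : ℝ | ∃ P : Finset (Fin N), P.Nonempty ∧ P ≠ Finset.univ ∧ b = |∑ i ∈ P, a i|}
      with hSSdef
    have hSSlb : ∀ b ∈ SS, (0:ℝ) ≤ b := by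
      rintro b ⟨P, -, -, rfl⟩
      exact abs_nonneg _
    -- N ≥ 2, else the defining set is empty and `A₀ = 0`
    rcases Nat.lt_or_ge N 2 with hN2 | hN2
    · exfalso
      apply hA₀ne
      have hNe : N = 1 := by omega
      subst hNe
      have : SS = ∅ := by
        ext b
        simp only [hSSdef, Set.mem_setOf_eq, Set.mem_empty_iff_false, iff_false, not_exists]
        rintro P ⟨hPne, hPuniv, -⟩
        apply hPuniv
        apply Finset.eq_univ_of_card
        have h1 := Finset.card_le_univ P
        have h2 := Finset.card_pos.2 hPne
        simp only [Fintype.card_fin] at h1 ⊢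
        omega
      rw [minProperClusterSum, ← hSSdef, this, Real.sInf_empty]
    have hSSne : SS.Nonempty := by
      have hN0 : 0 < N := by omega
      set i0 : Fin N := ⟨0, hN0⟩ with hi0
      have hne : ({i0} : Finset (Fin N)) ≠ Finset.univ := by
        intro h
        have h1 : ({i0} : Finset (Fin N)).card = (Finset.univ : Finset (Fin N)).card := by
          rw [h]
        simp only [Finset.card_singleton, Finset.card_univ, Fintype.card_fin] at h1
        omega
      have hmem : |∑ k ∈ ({i0} : Finset (Fin N)), a k| ∈ SS :=
        ⟨({i0} : Finset (Fin N)), Finset.singleton_nonempty _, hne, rfl⟩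
      exact ⟨_, hmem⟩
    have hA₀eq : minProperClusterSum N a = sInf SS := rfl
    have hA₀0 : 0 ≤ minProperClusterSum N a := by
      rw [hA₀eq]
      exact le_csInf hSSne hSSlb
    have hA₀ : 0 < minProperClusterSum N a := lt_of_le_of_ne hA₀0 (Ne.symm hA₀ne)
    set A₀ := minProperClusterSum N a with hA₀def
    have hS : ∀ Q : Finset (Fin N), Q.Nonempty → Q ≠ Finset.univ → A₀ ≤ |∑ i ∈ Q, a i| := by
      intro Q hQne hQu
      exact csInf_le ⟨0, hSSlb⟩ ⟨Q, hQne, hQu, rfl⟩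
    -- the velocity field
    set v : Fin N → ℝ → Plane := fun i s =>
      (∑ j ∈ Finset.univ.erase i, a j • gradPerp G (x i s - x j s)) + f s (x i s) with hvdef
    have hsub : Set.Icc (0:ℝ) t ⊆ Set.Ico (0:ℝ) T :=
      fun z hz => ⟨hz.1, lt_of_le_of_lt hz.2 ht.2⟩
    have hdiff : ∀ k ∈ (Finset.univ : Finset (Fin N)), ∀ w ∈ Set.Icc (0:ℝ) t,
        HasDerivWithinAt (x k) (v k w) (Set.Icc (0:ℝ) t) w :=
      fun k _ w hw => (hsol.2 k w (hsub hw)).mono hsub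
    have hforce : ∀ k ∈ (Finset.univ : Finset (Fin N)), ∀ w ∈ Set.Icc (0:ℝ) t,
        ‖v k w - intF a G x Finset.univ k w‖ ≤ F := by
      intro k _ w hw
      have h1 : v k w - intF a G x Finset.univ k w = f w (x k w) := by
        simp only [hvdef, intF]
        abel
      rw [h1]
      exact hfb w (hsub hw) (x k w)
    have hcore := core_holds hM hGM (le_refl (∑ k, |a k|)) hA₀ (le_refl (1/A₀)) hS N
      Finset.univ (by simp) F 0 t hF ht.1 hdiff hforce t
      (Set.right_mem_Icc.2 ht.1) i (Finset.mem_univ i) j (Finset.mem_univ j)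
    rw [sub_zero] at hcore
    have h0α : 0 ≤ ∑ k, |a k| := Finset.sum_nonneg fun k _ => abs_nonneg _
    have h0β : 0 ≤ 1/A₀ := by positivity
    calc ‖(x i t - x j t) - (x i 0 - x j 0)‖
        ≤ Cb N F t (∑ k, |a k|) (1/A₀) M := hcore
      _ ≤ Cb N F T (∑ k, |a k|) (1/A₀) M :=
          Cb_mono_args N F F t T _ _ _ _ M M hF le_rfl ht.1 ht.2.le h0α le_rfl h0β le_rfl
            hM le_rfl
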